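/- There is no injective continuous map f : 2^ω → 2^ω reducing 𝔹₀ := {(0α, 1β) : (α, β) ∈ 𝔾₀} to G_{s(𝔾₀)} := {(0α, 1β) : (α, β) ∈ s(𝔾₀)}; i.e., 𝔹₀ ⋢_c G_{s(𝔾₀)}. -/

import Mathlib

abbrev Cantor := ℕ → Bool

/-- Prepending a bit to a point of Cantor space: `εα`. -/
def bcons (b : Bool) (α : Cantor) : Cantor := fun k =>
  match k with
  | 0 => b
  | Nat.succ m => α m

/-- The point of Cantor space obtained by concatenating a finite sequence `u`
with an infinite sequence `γ`. -/
def catSeq (u : List Bool) (γ : ℕ → Bool) : ℕ → Bool := fun k =>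
  if h : k < u.length then u.get ⟨k, h⟩ else γ (k - u.length)

/-- The relation `𝔾₀` on Cantor space associated with the sequence `s`. -/
def G0 (s : ℕ → List Bool) : Set (Cantor × Cantor) :=
  {p | ∃ (n : ℕ) (γ : ℕ → Bool),
    p = (catSeq (s n ++ [false]) γ, catSeq (s n ++ [true]) γ)}

/-- The symmetrization `s(A) = A ∪ A⁻¹` of a relation. -/
def symRel {X : Type*} (A : Set (X × X)) : Set (X × X) := A ∪ {p | (p.2, p.1) ∈ A}

/-- `𝔹₀ := {(0α, 1β) : (α, β) ∈ 𝔾₀}`. -/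
def B0 (s : ℕ → List Bool) : Set (Cantor × Cantor) :=
  {p | ∃ q ∈ G0 s, p = (bcons false q.1, bcons true q.2)}

/-- `G_{s(𝔾₀)} := {(0α, 1β) : (α, β) ∈ s(𝔾₀)}`. -/
def GsG0 (s : ℕ → List Bool) : Set (Cantor × Cantor) :=
  {p | ∃ q ∈ symRel (G0 s), p = (bcons false q.1, bcons true q.2)}

/-! ### Auxiliary lemmas -/

lemma catSnoc_lt (u : List Bool) (b : Bool) (γ : ℕ → Bool) (k : ℕ) (hk : k < u.length) :
    catSeq (u ++ [b]) γ k = u.get ⟨k, hk⟩ := by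
  have h : k < (u ++ [b]).length := by simp; omega
  simp only [catSeq, dif_pos h, List.get_eq_getElem]
  exact List.getElem_append_left (by omega)

lemma catSnoc_len (u : List Bool) (b : Bool) (γ : ℕ → Bool) :
    catSeq (u ++ [b]) γ u.length = b := by
  have h : u.length < (u ++ [b]).length := by simp
  simp only [catSeq, dif_pos h, List.get_eq_getElem]
  exact List.getElem_concat_length rfl h

lemma catSnoc_gt (u : List Bool) (b : Bool) (γ : ℕ → Bool) (k : ℕ) (hk : u.length < k) :
    catSeq (u ++ [b]) γ k = γ (k - u.length - 1) := by
  have h : ¬ k < (u ++ [b]).length := by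
    simp only [List.length_append, List.length_singleton]; omega
  have hl : (u ++ [b]).length = u.length + 1 := by simp
  show (if h : k < (u ++ [b]).length then (u ++ [b]).get ⟨k, h⟩
    else γ (k - (u ++ [b]).length)) = _
  rw [dif_neg h, hl]
  congr 1

/-- Characterization of membership in `G0`. -/
lemma mem_G0_iff (s : ℕ → List Bool) (a b : Cantor) :
    (a, b) ∈ G0 s ↔ ∃ n, a (s n).length = false ∧ b (s n).length = true ∧
      (∀ j, j ≠ (s n).length → a j = b j) ∧
      (∀ j (hj : j < (s n).length), a j = (s n).get ⟨j, hj⟩) := by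
  constructor
  · rintro ⟨n, γ, hp⟩
    have h1 : a = catSeq (s n ++ [false]) γ := congrArg Prod.fst hp
    have h2 : b = catSeq (s n ++ [true]) γ := congrArg Prod.snd hp
    subst h1; subst h2
    refine ⟨n, catSnoc_len _ _ _, catSnoc_len _ _ _, ?_, fun j hj => catSnoc_lt _ _ _ _ hj⟩
    intro j hj
    rcases lt_or_gt_of_ne hj with h | h
    · rw [catSnoc_lt _ _ _ _ h, catSnoc_lt _ _ _ _ h]
    · rw [catSnoc_gt _ _ _ _ h, catSnoc_gt _ _ _ _ h]
  · rintro ⟨n, ha, hb, hab, hpre⟩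
    refine ⟨n, fun i => a ((s n).length + 1 + i), ?_⟩
    have hA : a = catSeq (s n ++ [false]) (fun i => a ((s n).length + 1 + i)) := by
      funext k
      rcases lt_trichotomy k (s n).length with h | h | h
      · rw [catSnoc_lt _ _ _ _ h]; exact hpre k h
      · rw [h, catSnoc_len]; exact ha
      · rw [catSnoc_gt _ _ _ _ h]
        exact (congrArg a (by omega)).symm
    have hB : b = catSeq (s n ++ [true]) (fun i => a ((s n).length + 1 + i)) := by
      funext k
      rcases lt_trichotomy k (s n).length with h | h | h
      · rw [catSnoc_lt _ _ _ _ h, ← hab k (by omega)]; exact hpre k h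
      · rw [h, catSnoc_len]; exact hb
      · rw [catSnoc_gt _ _ _ _ h, ← hab k (by omega)]
        exact (congrArg a (by omega)).symm
    rw [Prod.ext_iff]
    exact ⟨hA, hB⟩

/-- Pairs in `G0` (hence in its symmetrization) differ in at most one coordinate. -/
lemma symRel_G0_ne_aux (s : ℕ → List Bool) (a b : Cantor)
    (h : (a, b) ∈ symRel (G0 s)) (i j : ℕ) (hij : i ≠ j) : a i = b i ∨ a j = b j := by
  rcases h with h | h
  · obtain ⟨n, -, -, hab, -⟩ := (mem_G0_iff s a b).1 h
    rcases eq_or_ne i (s n).length with hi | hi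
    · exact Or.inr (hab j (by omega))
    · exact Or.inl (hab i hi)
  · obtain ⟨n, -, -, hab, -⟩ := (mem_G0_iff s b a).1 h
    rcases eq_or_ne i (s n).length with hi | hi
    · exact Or.inr (hab j (by omega)).symm
    · exact Or.inl (hab i hi).symm

lemma G0_asymm (s : ℕ → List Bool) (a b : Cantor)
    (h1 : (a, b) ∈ G0 s) (h2 : (b, a) ∈ G0 s) : False := by
  obtain ⟨n, han, hbn, habn, -⟩ := (mem_G0_iff s a b).1 h1
  obtain ⟨m, hbm, ham, -, -⟩ := (mem_G0_iff s b a).1 h2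
  rcases eq_or_ne (s m).length (s n).length with h | h
  · rw [h] at ham; rw [han] at ham; exact Bool.false_ne_true ham
  · have := habn (s m).length h
    rw [ham, hbm] at this
    simp at this

lemma G0_irrefl (s : ℕ → List Bool) (a : Cantor) : (a, a) ∉ G0 s := by
  intro h
  obtain ⟨n, han, hbn, -, -⟩ := (mem_G0_iff s a a).1 h
  rw [han] at hbn
  exact Bool.false_ne_true hbn

/-- Continuity transported to eventual pointwise convergence of sequences. -/
lemma cont_ev (F : Cantor → Cantor) (hF : Continuous F) (a : Cantor) (ak : ℕ → Cantor)
    (h : ∀ j, ∃ K, ∀ k ≥ K, ak k j = a j) :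
    ∀ j, ∃ K, ∀ k ≥ K, F (ak k) j = F a j := by
  have h1 : Filter.Tendsto ak Filter.atTop (nhds a) := by
    rw [tendsto_pi_nhds]
    intro j
    rw [congrFun (nhds_discrete Bool) (a j), Filter.tendsto_pure]
    exact Filter.eventually_atTop.2 (h j)
  intro j
  have h2 : Filter.Tendsto (fun k => F (ak k) j) Filter.atTop (nhds (F a j)) :=
    ((continuous_apply j).tendsto (F a)).comp ((hF.tendsto a).comp h1)
  rw [congrFun (nhds_discrete Bool) (F a j), Filter.tendsto_pure] at h2
  exact Filter.eventually_atTop.1 h2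

lemma bcons_inj (b : Bool) (x y : Cantor) (h : bcons b x = bcons b y) : x = y := by
  funext i
  exact congrFun h (i + 1)

lemma continuous_bcons (b : Bool) : Continuous (bcons b) := by
  refine continuous_pi fun k => ?_
  match k with
  | 0 => exact continuous_const
  | Nat.succ m => exact continuous_apply m

/-- The key limit lemma: a pointwise limit of pairs in `symRel (G0 s)` which is not
itself in `symRel (G0 s)` lies on the diagonal. -/
lemma limit_diag (s : ℕ → List Bool) (ξ η : Cantor) (ξk ηk : ℕ → Cantor)
    (hmem : ∀ k, (ξk k, ηk k) ∈ symRel (G0 s))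
    (hconv : ∀ j, ∃ K, ∀ k ≥ K, ξk k j = ξ j ∧ ηk k j = η j)
    (hnot : (ξ, η) ∉ symRel (G0 s)) : ξ = η := by
  classical
  choose Kf hKf using hconv
  -- ξ and η differ in at most one coordinate
  have hone : ∀ i j, i ≠ j → ξ i ≠ η i → ξ j = η j := by
    intro i j hij hi
    by_contra hj
    set k := max (Kf i) (Kf j) with hk
    have hco := symRel_G0_ne_aux s (ξk k) (ηk k) (hmem k) i j hij
    have hC1 := hKf i k (le_max_left _ _)
    have hC2 := hKf j k (le_max_right _ _)
    rcases hco with h | h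
    · rw [hC1.1, hC1.2] at h; exact hi h
    · rw [hC2.1, hC2.2] at h; exact hj h
  by_contra hne
  obtain ⟨m, hm⟩ := Function.ne_iff.1 hne
  -- take a witness agreeing with (ξ, η) on coordinates 0..m
  set K := (Finset.range (m + 1)).sup Kf with hKdef
  have hag : ∀ j ≤ m, ξk K j = ξ j ∧ ηk K j = η j := by
    intro j hj
    exact hKf j K (Finset.le_sup (Finset.mem_range.2 (by omega)))
  apply hnot
  rcases hmem K with h | h
  · obtain ⟨n, han, hbn, hab, hpre⟩ := (mem_G0_iff s (ξk K) (ηk K)).1 h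
    have hmn : m = (s n).length := by
      by_contra hmn
      apply hm
      rw [← (hag m le_rfl).1, ← (hag m le_rfl).2]
      exact hab m hmn
    left
    refine (mem_G0_iff s ξ η).2 ⟨n, ?_, ?_, ?_, ?_⟩
    · rw [← hmn, ← (hag m le_rfl).1, hmn]; exact han
    · rw [← hmn, ← (hag m le_rfl).2, hmn]; exact hbn
    · intro j hj
      exact hone m j (by omega) hm
    · intro j hj
      rw [← (hag j (by omega)).1]
      exact hpre j hj
  · obtain ⟨n, han, hbn, hab, hpre⟩ := (mem_G0_iff s (ηk K) (ξk K)).1 h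
    have hmn : m = (s n).length := by
      by_contra hmn
      apply hm
      rw [← (hag m le_rfl).1, ← (hag m le_rfl).2]
      exact (hab m hmn).symm
    right
    refine (mem_G0_iff s η ξ).2 ⟨n, ?_, ?_, ?_, ?_⟩
    · rw [← hmn, ← (hag m le_rfl).2, hmn]; exact han
    · rw [← hmn, ← (hag m le_rfl).1, hmn]; exact hbn
    · intro j hj
      exact (hone m j (by omega) hm).symm
    · intro j hj
      rw [← (hag j (by omega)).2]
      exact hpre j hj

theorem stmt19 (s : ℕ → List Bool) (hlen : ∀ n, (s n).length = n)
    (hdense : ∀ t : List Bool, ∃ n, t <+: s n) :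
    ¬ ∃ f : Cantor → Cantor, Continuous f ∧ Function.Injective f ∧
      ∀ x y : Cantor, (x, y) ∈ B0 s ↔ (f x, f y) ∈ GsG0 s := by
  classical
  rintro ⟨f, hf, hinj, hred⟩
  -- approximating sequences: for each α and k, a pair in G0 whose coordinates
  -- agree with α up to k
  have happrox : ∀ α : Cantor, ∃ A B : ℕ → Cantor,
      (∀ k, (A k, B k) ∈ G0 s) ∧
      (∀ j, ∃ K, ∀ k ≥ K, A k j = α j) ∧
      (∀ j, ∃ K, ∀ k ≥ K, B k j = α j) := by
    intro α
    have hch : ∀ k : ℕ, ∃ n, (List.ofFn fun i : Fin k => α i) <+: s n := fun k =>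
      hdense _
    choose nf hnf using hch
    refine ⟨fun k => catSeq (s (nf k) ++ [false]) (fun _ => false),
            fun k => catSeq (s (nf k) ++ [true]) (fun _ => false),
            fun k => ⟨nf k, fun _ => false, rfl⟩, ?_, ?_⟩ <;>
    · intro j
      refine ⟨j + 1, fun k hk => ?_⟩
      have hlenk : k ≤ (s (nf k)).length := by
        have := (hnf k).length_le
        simpa using this
      have hj : j < (s (nf k)).length := by omega
      show catSeq _ _ j = α j
      rw [catSnoc_lt _ _ _ _ hj]
      have := (hnf k).getElem (i := j) (by simp; omega)
      simp only [List.get_eq_getElem]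
      rw [← this]
      simp [List.getElem_ofFn]
  -- the first bit is preserved
  have hA0 : ∀ α, f (bcons false α) 0 = false := by
    intro α
    obtain ⟨A, B, hAB, hAc, -⟩ := happrox α
    have hev := cont_ev (fun x => f (bcons false x))
      (hf.comp (continuous_bcons false)) α A hAc 0
    obtain ⟨K, hK⟩ := hev
    have hmem : (bcons false (A K), bcons true (B K)) ∈ B0 s :=
      ⟨(A K, B K), hAB K, rfl⟩
    obtain ⟨q, -, hq⟩ := (hred _ _).1 hmem
    have e : f (bcons false (A K)) = bcons false q.1 := congrArg Prod.fst hq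
    have : f (bcons false (A K)) 0 = false := by rw [e]; rfl
    rw [← hK K le_rfl]
    exact this
  have hA1 : ∀ β, f (bcons true β) 0 = true := by
    intro β
    obtain ⟨A, B, hAB, -, hBc⟩ := happrox β
    have hev := cont_ev (fun x => f (bcons true x))
      (hf.comp (continuous_bcons true)) β B hBc 0
    obtain ⟨K, hK⟩ := hev
    have hmem : (bcons false (A K), bcons true (B K)) ∈ B0 s :=
      ⟨(A K, B K), hAB K, rfl⟩
    obtain ⟨q, -, hq⟩ := (hred _ _).1 hmem
    have e : f (bcons true (B K)) = bcons true q.2 := congrArg Prod.snd hq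
    have : f (bcons true (B K)) 0 = true := by rw [e]; rfl
    rw [← hK K le_rfl]
    exact this
  -- the rectangular reduction
  set g : Cantor → Cantor := fun α i => f (bcons false α) (i + 1) with hgdef
  set h : Cantor → Cantor := fun β i => f (bcons true β) (i + 1) with hhdef
  have hgf : ∀ α, f (bcons false α) = bcons false (g α) := by
    intro α
    funext k
    match k with
    | 0 => exact hA0 α
    | Nat.succ m => rfl
  have hhf : ∀ β, f (bcons true β) = bcons true (h β) := by
    intro β
    funext k
    match k with
    | 0 => exact hA1 β
    | Nat.succ m => rfl
  have hgc : Continuous g := continuous_pi fun i =>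
    (continuous_apply (i + 1)).comp (hf.comp (continuous_bcons false))
  have hhc : Continuous h := continuous_pi fun i =>
    (continuous_apply (i + 1)).comp (hf.comp (continuous_bcons true))
  have hred' : ∀ α β : Cantor, (α, β) ∈ G0 s ↔ (g α, h β) ∈ symRel (G0 s) := by
    intro α β
    constructor
    · intro hm
      obtain ⟨q, hq1, hq2⟩ := (hred (bcons false α) (bcons true β)).1 ⟨(α, β), hm, rfl⟩
      have e1' : f (bcons false α) = bcons false q.1 := congrArg Prod.fst hq2
      have e2' : f (bcons true β) = bcons true q.2 := congrArg Prod.snd hq2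
      have e1 : bcons false q.1 = bcons false (g α) := by rw [← e1', hgf]
      have e2 : bcons true q.2 = bcons true (h β) := by rw [← e2', hhf]
      have hqeq : q = (g α, h β) := Prod.ext (bcons_inj _ _ _ e1) (bcons_inj _ _ _ e2)
      rw [← hqeq]; exact hq1
    · intro hm
      have : (f (bcons false α), f (bcons true β)) ∈ GsG0 s := by
        refine ⟨(g α, h β), hm, ?_⟩
        rw [hgf, hhf]
      obtain ⟨q, hq1, hq2⟩ := (hred _ _).2 this
      have e1' : bcons false α = bcons false q.1 := congrArg Prod.fst hq2
      have e2' : bcons true β = bcons true q.2 := congrArg Prod.snd hq2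
      have e1 : α = q.1 := bcons_inj _ _ _ e1'
      have e2 : β = q.2 := bcons_inj _ _ _ e2'
      rw [e1, e2]
      exact hq1
  -- g = h via the limit lemma
  have hgh : ∀ α, g α = h α := by
    intro α
    obtain ⟨A, B, hAB, hAc, hBc⟩ := happrox α
    refine limit_diag s (g α) (h α) (fun k => g (A k)) (fun k => h (B k))
      (fun k => (hred' (A k) (B k)).1 (hAB k)) ?_ ?_
    · intro j
      obtain ⟨K1, hK1⟩ := cont_ev g hgc α A hAc j
      obtain ⟨K2, hK2⟩ := cont_ev h hhc α B hBc j
      exact ⟨max K1 K2, fun k hk =>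
        ⟨hK1 k (le_trans (le_max_left _ _) hk), hK2 k (le_trans (le_max_right _ _) hk)⟩⟩
    · intro hm
      exact G0_irrefl s α ((hred' α α).2 hm)
  -- derive the contradiction from asymmetry
  obtain ⟨A, B, hAB, -, -⟩ := happrox (fun _ => false)
  have h1 : (A 0, B 0) ∈ G0 s := hAB 0
  have h2 : (g (A 0), h (B 0)) ∈ symRel (G0 s) := (hred' _ _).1 h1
  have h3 : (g (B 0), h (A 0)) ∈ symRel (G0 s) := by
    rw [← hgh (B 0)] at h2
    rw [← hgh (A 0)]
    rcases h2 with h2 | h2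
    · exact Or.inr h2
    · exact Or.inl h2
  have h4 : (B 0, A 0) ∈ G0 s := (hred' _ _).2 h3
  exact G0_asymm s (A 0) (B 0) h1 h4
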